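/- Let A be a finite NM algebra and let g ∈ A be a minimal idempotent join-irreducible element (g is join-irreducible, g⊙g = g, and there is no join-irreducible g' with g'⊙g' = g' and g' < g). Then the upper set ↑g = {x ∈ A : x ≥ g} is a prime filter of A that is maximal with respect to inclusion among proper filters of A. -/

import Mathlib

/-- A valuation on a lattice: ν(x)+ν(y) = ν(x⊔y)+ν(x⊓y). -/
def IsValuation {α : Type*} [Lattice α] (ν : α → ℝ) : Prop :=
  ∀ x y : α, ν x + ν y = ν (x ⊔ y) + ν (x ⊓ y)

/-- Join-irreducible element of a lattice with bottom. -/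
def JoinIrred {α : Type*} [Lattice α] [OrderBot α] (x : α) : Prop :=
  x ≠ ⊥ ∧ ∀ y z : α, x = y ⊔ z → x = y ∨ x = z

/-- An NM algebra: a bounded distributive lattice with a commutative monoidal
operation `odot` (unit ⊤) and its residuum `himp`, satisfying prelinearity,
the weak nilpotent minimum law and involutivity of the negation ¬x = x → ⊥. -/
class NMAlgebra (α : Type*) extends DistribLattice α, BoundedOrder α where
  odot : α → α → α
  himp : α → α → α
  odot_comm : ∀ x y : α, odot x y = odot y x
  odot_assoc : ∀ x y z : α, odot (odot x y) z = odot x (odot y z)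
  odot_top : ∀ x : α, odot x ⊤ = x
  residuation : ∀ x y z : α, odot x y ≤ z ↔ x ≤ himp y z
  prelinearity : ∀ x y : α, himp x y ⊔ himp y x = ⊤
  wnm : ∀ x y : α, himp (odot x y) ⊥ ⊔ himp (x ⊓ y) (odot x y) = ⊤
  involution : ∀ x : α, himp (himp x ⊥) ⊥ = x

/-- Negation in an NM algebra: ¬x = x → ⊥. -/
def NMAlgebra.neg {α : Type*} [NMAlgebra α] (x : α) : α := NMAlgebra.himp x ⊥

/-- A filter of an NM algebra: a nonempty upper set closed under ⊙. -/
def NMAlgebra.IsFilter {α : Type*} [NMAlgebra α] (S : Set α) : Prop :=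
  S.Nonempty ∧ (∀ x y : α, x ∈ S → x ≤ y → y ∈ S) ∧
    ∀ x y : α, x ∈ S → y ∈ S → NMAlgebra.odot x y ∈ S

/-- A prime filter: a proper filter such that x⊔y ∈ S implies x ∈ S or y ∈ S. -/
def NMAlgebra.IsPrimeFilter {α : Type*} [NMAlgebra α] (S : Set α) : Prop :=
  NMAlgebra.IsFilter S ∧ S ≠ Set.univ ∧ ∀ x y : α, x ⊔ y ∈ S → x ∈ S ∨ y ∈ S

/-- A maximal prime filter: a prime filter maximal w.r.t. inclusion among proper filters. -/
def NMAlgebra.IsMaximalPrimeFilter {α : Type*} [NMAlgebra α] (S : Set α) : Prop :=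
  NMAlgebra.IsPrimeFilter S ∧
    ∀ T : Set α, NMAlgebra.IsFilter T → T ≠ Set.univ → S ⊆ T → T = S

/-- The idempotent Euler characteristic: the valuation with ν(⊥)=0, ν(g)=1 on
idempotent join-irreducibles and ν(g)=0 on the other join-irreducibles. -/
def IsIdemEuler {α : Type*} [NMAlgebra α] (ν : α → ℝ) : Prop :=
  IsValuation ν ∧ ν ⊥ = 0 ∧
    ∀ g : α, JoinIrred g →
      (NMAlgebra.odot g g = g → ν g = 1) ∧ (NMAlgebra.odot g g ≠ g → ν g = 0)

/-- Negation on the three-element NM chain 𝟯 = {0, ½, 1}, modelled as `Fin 3`. -/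
def neg3 : Fin 3 → Fin 3 := ![2, 1, 0]

/-- The monoidal operation of 𝟯: x⊙y = min(x,y) if x > ¬y, and 0 otherwise. -/
def odot3 (x y : Fin 3) : Fin 3 := if neg3 y < x then min x y else 0

/-- The residuum of 𝟯: x→y = 1 if x ≤ y, and max(¬x,y) otherwise. -/
def himp3 (x y : Fin 3) : Fin 3 := if x ≤ y then 2 else max (neg3 x) y

/-- NM homomorphisms into the three-element NM chain 𝟯 (as `Fin 3`, top element `2`). -/
def IsHom3 {α : Type*} [NMAlgebra α] (h : α → Fin 3) : Prop :=
  h ⊥ = 0 ∧ h ⊤ = 2 ∧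
  (∀ x y : α, h (x ⊓ y) = min (h x) (h y)) ∧
  (∀ x y : α, h (x ⊔ y) = max (h x) (h y)) ∧
  (∀ x y : α, h (NMAlgebra.odot x y) = odot3 (h x) (h y)) ∧
  (∀ x y : α, h (NMAlgebra.himp x y) = himp3 (h x) (h y))

/-- Negation on the two-element NM chain 𝟚 = {0, 1}, modelled as `Fin 2`. -/
def neg2 : Fin 2 → Fin 2 := ![1, 0]

/-- The monoidal operation of 𝟚 is ∧ (Boolean). -/
def odot2 (x y : Fin 2) : Fin 2 := min x y

/-- The residuum of 𝟚: Boolean implication x→y = max(¬x, y). -/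
def himp2 (x y : Fin 2) : Fin 2 := max (neg2 x) y

/-- NM homomorphisms into the two-element NM chain 𝟚 (as `Fin 2`, top element `1`). -/
def IsHom2 {α : Type*} [NMAlgebra α] (h : α → Fin 2) : Prop :=
  h ⊥ = 0 ∧ h ⊤ = 1 ∧
  (∀ x y : α, h (x ⊓ y) = min (h x) (h y)) ∧
  (∀ x y : α, h (x ⊔ y) = max (h x) (h y)) ∧
  (∀ x y : α, h (NMAlgebra.odot x y) = odot2 (h x) (h y)) ∧
  (∀ x y : α, h (NMAlgebra.himp x y) = himp2 (h x) (h y))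

/-- The nilpotent minimum t-norm on ℝ (intended on [0,1]). -/
noncomputable def nmT (x y : ℝ) : ℝ := if 1 < x + y then min x y else 0

/-- The residuum of the nilpotent minimum t-norm on ℝ (intended on [0,1]). -/
noncomputable def nmImp (x y : ℝ) : ℝ := if x ≤ y then 1 else max (1 - x) y

section Aux

open NMAlgebra

variable {A : Type*} [NMAlgebra A]

lemma odot_mono_left {x y : A} (z : A) (h : x ≤ y) :
    NMAlgebra.odot x z ≤ NMAlgebra.odot y z :=
  (NMAlgebra.residuation x z (NMAlgebra.odot y z)).2
    (h.trans ((NMAlgebra.residuation y z (NMAlgebra.odot y z)).1 le_rfl))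

lemma odot_le_left (x y : A) : NMAlgebra.odot x y ≤ x := by
  calc NMAlgebra.odot x y = NMAlgebra.odot y x := NMAlgebra.odot_comm x y
    _ ≤ NMAlgebra.odot ⊤ x := odot_mono_left x le_top
    _ = NMAlgebra.odot x ⊤ := NMAlgebra.odot_comm ⊤ x
    _ = x := NMAlgebra.odot_top x

lemma odot_le_right (x y : A) : NMAlgebra.odot x y ≤ y := by
  rw [NMAlgebra.odot_comm]; exact odot_le_left y x

lemma odot_bot (x : A) : NMAlgebra.odot (⊥ : A) x = ⊥ :=
  le_antisymm ((NMAlgebra.residuation ⊥ x ⊥).2 bot_le) bot_le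

lemma odot_sup (x y z : A) :
    NMAlgebra.odot (y ⊔ z) x = NMAlgebra.odot y x ⊔ NMAlgebra.odot z x := by
  refine le_antisymm ?_ (sup_le (odot_mono_left x le_sup_left)
    (odot_mono_left x le_sup_right))
  refine (NMAlgebra.residuation _ _ _).2 (sup_le ?_ ?_)
  · exact (NMAlgebra.residuation _ _ _).1 le_sup_left
  · exact (NMAlgebra.residuation _ _ _).1 le_sup_right

lemma odot_finsetSup {ι : Type*} (s : Finset ι) (f : ι → A) (x : A) :
    NMAlgebra.odot (s.sup f) x = s.sup fun i => NMAlgebra.odot (f i) x := by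
  classical
  induction s using Finset.induction with
  | empty => simpa using odot_bot x
  | insert _ _ hi ih => rw [Finset.sup_insert, Finset.sup_insert, odot_sup, ih]

lemma supIrred_joinIrred {x : A} (h : SupIrred x) : JoinIrred x := by
  refine ⟨fun hb => h.1 (hb ▸ isMin_bot), fun y z hyz => (h.2 hyz.symm).imp Eq.symm Eq.symm⟩

end Aux

/-- the upper set of a minimal idempotent join-irreducible element
of a finite NM algebra is a maximal prime filter. -/
theorem stmt10 {A : Type*} [NMAlgebra A] [Fintype A] (g : A) (hg : JoinIrred g)
    (hid : NMAlgebra.odot g g = g)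
    (hmin : ¬ ∃ g' : A, JoinIrred g' ∧ NMAlgebra.odot g' g' = g' ∧ g' < g) :
    NMAlgebra.IsMaximalPrimeFilter {x : A | g ≤ x} := by
  classical
  have hfilter : NMAlgebra.IsFilter {x : A | g ≤ x} := by
    refine ⟨⟨g, le_rfl⟩, fun x y hx hxy => hx.trans hxy, fun x y hx hy => ?_⟩
    calc g = NMAlgebra.odot g g := hid.symm
      _ ≤ NMAlgebra.odot x g := odot_mono_left g hx
      _ ≤ NMAlgebra.odot x y := by
          rw [NMAlgebra.odot_comm x g, NMAlgebra.odot_comm x y]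
          exact odot_mono_left x hy
  have hproper : {x : A | g ≤ x} ≠ Set.univ := by
    intro h
    exact hg.1 (le_bot_iff.1 (Set.eq_univ_iff_forall.1 h ⊥))
  have hprime : ∀ x y : A, x ⊔ y ∈ {x : A | g ≤ x} → g ≤ x ∨ g ≤ y := by
    intro x y hxy
    have : g = (g ⊓ x) ⊔ (g ⊓ y) := by
      rw [← inf_sup_left]; exact (inf_eq_left.2 hxy).symm
    rcases hg.2 _ _ this with h | h
    · exact Or.inl (h.le.trans inf_le_right)
    · exact Or.inr (h.le.trans inf_le_right)
  refine ⟨⟨hfilter, hproper, hprime⟩, ?_⟩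
  intro T hT hTne hsub
  obtain ⟨hTnonempty, hup, hmul⟩ := hT
  have hinf : ∀ x y : A, x ∈ T → y ∈ T → x ⊓ y ∈ T := fun x y hx hy =>
    hup _ _ (hmul x y hx hy) (le_inf (odot_le_left x y) (odot_le_right x y))
  -- the infimum of T
  set s : Finset A := (Set.toFinite T).toFinset with hs
  have hsne : s.Nonempty := by
    obtain ⟨t, ht⟩ := hTnonempty
    exact ⟨t, (Set.Finite.mem_toFinset _).2 ht⟩
  set m : A := s.inf' hsne id with hmdef
  have hmT : m ∈ T := by
    refine Finset.inf'_induction hsne id (fun a ha b hb => hinf a b ha hb) ?_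
    intro b hb; exact (Set.Finite.mem_toFinset _).1 hb
  have hmle : ∀ t ∈ T, m ≤ t := fun t ht =>
    Finset.inf'_le id ((Set.Finite.mem_toFinset _).2 ht)
  have hmg : m ≤ g := hmle g (hsub le_rfl)
  have hmbot : m ≠ ⊥ := by
    intro h
    apply hTne
    refine Set.eq_univ_of_forall fun x => hup m x hmT (h ▸ bot_le)

  have hmidem : NMAlgebra.odot m m = m :=
    le_antisymm (odot_le_left m m) (hmle _ (hmul m m hmT hmT))
  -- decompose m into join-irreducibles
  obtain ⟨u, hu_sup, hu_irr⟩ := exists_supIrred_decomposition m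
  have hune : u.Nonempty := by
    rcases Finset.eq_empty_or_nonempty u with h | h
    · exact absurd (by simpa [h] using hu_sup.symm) hmbot
    · exact h
  obtain ⟨j, hju, hjmax⟩ := u.exists_maximal hune
  have hjprime : SupPrime j := supPrime_iff_supIrred.2 (hu_irr hju)
  have hjm : j ≤ m := hu_sup ▸ Finset.le_sup (f := id) hju
  -- m = sup over i,l of i ⊙ l
  have hmm : m = u.sup fun i => u.sup fun l => NMAlgebra.odot i l := by
    conv_lhs => rw [← hmidem, ← hu_sup]
    rw [odot_finsetSup]
    refine Finset.sup_congr rfl fun i _ => ?_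
    rw [NMAlgebra.odot_comm, odot_finsetSup]
    exact Finset.sup_congr rfl fun l _ => by
      simp only [id_eq]; exact NMAlgebra.odot_comm l i
  have hj2 : j ≤ u.sup fun i => u.sup fun l => NMAlgebra.odot i l := hmm ▸ hjm
  rw [hjprime.le_finset_sup] at hj2
  obtain ⟨i, hiu, hji⟩ := hj2
  rw [hjprime.le_finset_sup] at hji
  obtain ⟨l, hlu, hjil⟩ := hji
  have hji' : j ≤ i := hjil.trans (odot_le_left i l)
  have hjl' : j ≤ l := hjil.trans (odot_le_right i l)
  have hi : i = j := ((hji'.lt_or_eq).resolve_left (fun h => lt_irrefl _ (h.trans_le (hjmax hiu h.le)))).symm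
  have hl : l = j := ((hjl'.lt_or_eq).resolve_left (fun h => lt_irrefl _ (h.trans_le (hjmax hlu h.le)))).symm
  have hjidem : NMAlgebra.odot j j = j := by
    refine le_antisymm (odot_le_left j j) ?_
    rw [hi, hl] at hjil
    exact hjil
  -- j is an idempotent join-irreducible ≤ g, hence j = g by minimality
  have hjg : j ≤ g := hjm.trans hmg
  have hjeq : j = g := by
    rcases hjg.lt_or_eq with h | h
    · exact absurd ⟨j, supIrred_joinIrred (hu_irr hju), hjidem, h⟩ hmin
    · exact h
  have hgm : g ≤ m := hjeq ▸ hjm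
  ext t
  constructor
  · intro ht; exact hgm.trans (hmle t ht)
  · intro ht; exact hsub ht
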